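/- Let 0 < c < 1/2 and p ∈ (c, 1−c), q ∈ (0, p), and let u ∈ (0,1) satisfy p·u^{1−q} + (1−p)·u^{−q} = 1. Then p(1 − u^{1−q}) ≥ c(p − q). -/

import Mathlib

-- auxiliary: log x ≥ 1 - 1/x for x > 0
lemma aux_log_lb {x : ℝ} (hx : 0 < x) : 1 - x⁻¹ ≤ Real.log x := by
  have h := Real.log_le_sub_one_of_pos (show (0:ℝ) < x⁻¹ by positivity)
  rw [Real.log_inv] at h
  linarith

-- (q/p)^q ≥ 1 - p + q for 0 < q < p < 1
lemma aux_qp_pow {p q : ℝ} (hq0 : 0 < q) (hqp : q < p) (hp1 : p < 1) :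
    1 - p + q ≤ (q / p) ^ (q : ℝ) := by
  have hp0 : 0 < p := hq0.trans hqp
  set x : ℝ := q / p with hxdef
  have hx0 : 0 < x := by positivity
  have hx1 : x < 1 := (div_lt_one hp0).2 hqp
  have hq : q = p * x := by rw [hxdef]; field_simp
  have h1 : (1:ℝ) - p + q ≤ Real.exp (-(p * (1 - x))) := by
    have h := Real.add_one_le_exp (-(p * (1 - x)))
    have heq : 1 - p + q = -(p*(1-x)) + 1 := by rw [hq]; ring
    linarith
  have h2 : -(p * (1 - x)) ≤ q * Real.log x := by
    have hl : 1 - x⁻¹ ≤ Real.log x := aux_log_lb hx0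
    have hxl : x - 1 ≤ x * Real.log x := by
      have h := mul_le_mul_of_nonneg_left hl hx0.le
      have hxi : x * (1 - x⁻¹) = x - 1 := by field_simp
      linarith [hxi ▸ h]
    calc -(p * (1 - x)) = p * (x - 1) := by ring
      _ ≤ p * (x * Real.log x) := by nlinarith
      _ = q * Real.log x := by rw [hq]; ring
  have h3 : x ^ (q:ℝ) = Real.exp (q * Real.log x) := by
    rw [Real.rpow_def_of_pos hx0, mul_comm]
  calc (1:ℝ) - p + q ≤ Real.exp (-(p * (1 - x))) := h1
    _ ≤ Real.exp (q * Real.log x) := Real.exp_le_exp.2 h2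
    _ = x ^ (q:ℝ) := h3.symm

set_option maxHeartbeats 1000000 in
theorem stmt_4 (c p q u : ℝ) (hc : 0 < c) (hc' : c < 1/2)
    (hp : p ∈ Set.Ioo c (1 - c)) (hq : q ∈ Set.Ioo 0 p)
    (hu : u ∈ Set.Ioo (0:ℝ) 1)
    (heq : p * u ^ (1 - q) + (1 - p) * u ^ (-q) = 1) :
    c * (p - q) ≤ p * (1 - u ^ (1 - q)) := by
  obtain ⟨hcp, hpc⟩ := hp
  obtain ⟨hq0, hqp⟩ := hq
  obtain ⟨hu0, hu1⟩ := hu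
  have hp0 : 0 < p := hc.trans hcp
  have hp1 : p < 1 := by linarith
  have hq1 : q < 1 := hqp.trans hp1
  have h1q : (1:ℝ) - q ≠ 0 := by intro h; linarith [h]
  have h1q' : (0:ℝ) < 1 - q := by linarith
  have h1p : (0:ℝ) < 1 - p := by linarith
  -- u^q = p*u + (1-p)
  have h1 : u ^ (1 - q) = u * u ^ (-q) := by
    rw [show (1:ℝ) - q = 1 + (-q) by ring, Real.rpow_add hu0, Real.rpow_one]
  have h2 : u ^ q * u ^ (-q) = 1 := by
    rw [← Real.rpow_add hu0]; simp
  have h3 : u ^ (-q) * (p * u + (1 - p)) = 1 := by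
    rw [h1] at heq; nlinarith [heq]
  have hupow : u ^ q = p * u + (1 - p) := by
    calc u ^ q = u ^ q * (u ^ (-q) * (p * u + (1 - p))) := by rw [h3]; ring
      _ = (u ^ q * u ^ (-q)) * (p * u + (1 - p)) := by ring
      _ = p * u + (1 - p) := by rw [h2]; ring
  set x0 : ℝ := q * (1 - p) / (p * (1 - q)) with hx0def
  have hx0pos : 0 < x0 := div_pos (mul_pos hq0 h1p) (mul_pos hp0 h1q')
  have hx0lt1 : x0 < 1 := by
    rw [hx0def, div_lt_one (mul_pos hp0 h1q')]; nlinarith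
  have ha0 : (0:ℝ) < (1 - p) / (1 - q) := div_pos h1p h1q'
  -- ((1-p)/(1-q))^(1-q) ≤ 1-p+q  by AM-GM
  have hamgm1 : ((1 - p) / (1 - q)) ^ ((1:ℝ) - q) ≤ 1 - p + q := by
    calc ((1 - p) / (1 - q)) ^ ((1:ℝ) - q)
        = ((1 - p) / (1 - q)) ^ ((1:ℝ) - q) * 1 ^ (q:ℝ) := by
          rw [Real.one_rpow, mul_one]
      _ ≤ (1 - q) * ((1 - p) / (1 - q)) + q * 1 :=
          Real.geom_mean_le_arith_mean2_weighted (by linarith) hq0.le ha0.le zero_le_one (by ring)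
      _ = 1 - p + q := by field_simp [h1q]
  -- x0^q ≥ 1 - p + p * x0
  have hx0q : 1 - p + p * x0 ≤ x0 ^ (q:ℝ) := by
    have hsplit : x0 = (q / p) * ((1 - p) / (1 - q)) := by
      rw [hx0def]; field_simp [hp0.ne', h1q]
    have hmul : x0 ^ (q:ℝ) = (q / p) ^ (q:ℝ) * ((1 - p) / (1 - q)) ^ (q:ℝ) := by
      rw [hsplit, Real.mul_rpow (by positivity) ha0.le]
    have hsum : ((1 - p) / (1 - q)) ^ ((1:ℝ) - q) * ((1 - p) / (1 - q)) ^ (q:ℝ)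
        = (1 - p) / (1 - q) := by
      rw [← Real.rpow_add ha0]; simp
    have hval : 1 - p + p * x0 = (1 - p) / (1 - q) := by
      rw [hx0def]; field_simp [hp0.ne', h1q]; ring
    have hqq : 0 < ((1 - p) / (1 - q)) ^ (q:ℝ) := Real.rpow_pos_of_pos ha0 q
    have hkey := mul_le_mul_of_nonneg_right (hamgm1.trans (aux_qp_pow hq0 hqp hp1)) hqq.le
    rw [hsum] at hkey
    rw [hval, hmul]
    exact hkey
  -- u ≤ x0, by strict concavity of x ↦ x^q
  have hux0 : u ≤ x0 := by
    by_contra hcon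
    push_neg at hcon
    have hx0ne : (1:ℝ) - x0 ≠ 0 := by intro h; linarith
    have hsc := Real.strictConcaveOn_rpow hq0 hq1
    set a : ℝ := (1 - u) / (1 - x0) with hadef
    set b : ℝ := (u - x0) / (1 - x0) with hbdef
    have ha : 0 < a := by apply div_pos <;> linarith
    have hb : 0 < b := by apply div_pos <;> linarith
    have hab : a + b = 1 := by
      rw [hadef, hbdef, ← add_div, div_eq_one_iff_eq hx0ne]; ring
    have hkey := hsc.2 (Set.mem_Ici.2 hx0pos.le) (Set.mem_Ici.2 zero_le_one)
      (by intro h; exact absurd h (ne_of_lt hx0lt1)) ha hb hab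
    simp only [smul_eq_mul, Real.one_rpow, mul_one] at hkey
    have harg : a * x0 + b = u := by
      rw [hadef, hbdef, div_mul_eq_mul_div, ← add_div, div_eq_iff hx0ne]; ring
    rw [harg] at hkey
    -- hkey : a * x0 ^ q + b < u ^ q
    have h5 : a * (1 - p + p * x0) ≤ a * x0 ^ (q:ℝ) := mul_le_mul_of_nonneg_left hx0q ha.le
    nlinarith [hkey, h5, harg, hab, hupow]
  -- u^(1-q) ≤ x0^(1-q) ≤ q/p ≤ 1-p+q
  have hstep1 : u ^ ((1:ℝ) - q) ≤ x0 ^ ((1:ℝ) - q) :=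
    Real.rpow_le_rpow hu0.le hux0 (by linarith)
  have hstep2 : x0 ^ ((1:ℝ) - q) ≤ q / p := by
    calc x0 ^ ((1:ℝ) - q) = x0 ^ ((1:ℝ) - q) * 1 ^ (q:ℝ) := by rw [Real.one_rpow, mul_one]
      _ ≤ (1 - q) * x0 + q * 1 :=
          Real.geom_mean_le_arith_mean2_weighted (by linarith) hq0.le hx0pos.le zero_le_one
            (by ring)
      _ = q / p := by rw [hx0def]; field_simp [hp0.ne', h1q]; ring
  have hstep3 : q / p ≤ 1 - p + q := by
    rw [div_le_iff₀ hp0]; nlinarith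
  have hfinal : u ^ ((1:ℝ) - q) ≤ 1 - p + q := le_trans hstep1 (le_trans hstep2 hstep3)
  nlinarith [hfinal, mul_le_mul_of_nonneg_left hfinal hp0.le,
    mul_nonneg (sub_nonneg.2 hcp.le) (sub_nonneg.2 hqp.le)]
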